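/- Let k ≥ 0 and let ψ : ℝ^k → ℝ be continuously differentiable. Define φ on the open set {(z₀, z₁, x) ∈ ℂ × ℂ × ℝ^k : z₀z₁ + 1 ≠ 0} by φ(z₀, z₁, x) = −log|z₀z₁ + 1|² + |z₀|² + |z₁|² + ψ(x). Then the Fréchet derivative of φ vanishes at (z₀, z₁, x) if and only if the Fréchet derivative of ψ vanishes at x and either z₀ = z₁ = 0, or (z₁ = −conj(z₀) and |z₀|² = 2). In particular, every critical point of φ with |z₀z₁| < 2 satisfies z₀ = z₁ = 0 and has x a critical point of ψ. -/

import Mathlib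

/-- The plurisubharmonic local model `φ(z₀,z₁,x) = -log|z₀z₁+1|² + |z₀|² + |z₁|² + ψ(x)`. -/
noncomputable def psiModel {k : ℕ} (ψ : EuclideanSpace ℝ (Fin k) → ℝ)
    (p : ℂ × ℂ × EuclideanSpace ℝ (Fin k)) : ℝ :=
  -Real.log (Complex.normSq (p.1 * p.2.1 + 1)) + Complex.normSq p.1 +
    Complex.normSq p.2.1 + ψ p.2.2


open Complex

section aux

lemma full_ident' (s : ℝ) (g z₀ z₁ h₀ h₁ : ℂ) :
    -(s * (g * (starRingEnd ℂ) (z₀*h₁ + z₁*h₀) + (starRingEnd ℂ) g * (z₀*h₁ + z₁*h₀)).re)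
      + (z₀ * (starRingEnd ℂ) h₀ + (starRingEnd ℂ) z₀ * h₀).re
      + (z₁ * (starRingEnd ℂ) h₁ + (starRingEnd ℂ) z₁ * h₁).re
    = 2 * ((((starRingEnd ℂ) z₀ - (s:ℂ) * ((starRingEnd ℂ) g * z₁)) * h₀).re)
      + 2 * ((((starRingEnd ℂ) z₁ - (s:ℂ) * ((starRingEnd ℂ) g * z₀)) * h₁).re) := by
  simp [Complex.mul_re, Complex.add_re, Complex.add_im, Complex.mul_im, Complex.sub_re,
    Complex.sub_im, Complex.conj_re, Complex.conj_im, Complex.ofReal_re, Complex.ofReal_im]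
  ring

lemma re_forall_zero' {c : ℂ} (h : ∀ v : ℂ, (c * v).re = 0) : c = 0 := by
  have := h ((starRingEnd ℂ) c)
  rw [Complex.mul_conj] at this
  simpa [Complex.normSq_eq_zero] using (by simpa using this : Complex.normSq c = 0)

lemma coeff_zero_iff' (g z₀ z₁ : ℂ) (hg : g ≠ 0) :
    (starRingEnd ℂ) z₀ - (((Complex.normSq g)⁻¹ : ℝ) : ℂ) * ((starRingEnd ℂ) g * z₁) = 0
      ↔ (starRingEnd ℂ) z₀ * g = z₁ := by
  have hgc : (starRingEnd ℂ) g ≠ 0 := by simpa using hg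
  rw [sub_eq_zero]
  rw [show (((Complex.normSq g)⁻¹ : ℝ) : ℂ) = (g * (starRingEnd ℂ) g)⁻¹ by
    rw [Complex.mul_conj]; push_cast; ring]
  constructor
  · intro h
    field_simp at h
    exact mul_right_cancel₀ hgc (by linear_combination (starRingEnd ℂ) g * h)
  · intro h
    field_simp
    linear_combination h

end aux

lemma algebra_lemma (z₀ z₁ : ℂ) (hne : z₀ * z₁ + 1 ≠ 0) :
    ((starRingEnd ℂ) z₀ * (z₀*z₁+1) = z₁ ∧ (starRingEnd ℂ) z₁ * (z₀*z₁+1) = z₀) ↔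
    ((z₀ = 0 ∧ z₁ = 0) ∨ (z₁ = -(starRingEnd ℂ) z₀ ∧ Complex.normSq z₀ = 2)) := by
  constructor
  · rintro ⟨e₀, e₁⟩
    have e₁' : z₁ * ((starRingEnd ℂ) z₀ * (starRingEnd ℂ) z₁ + 1) = (starRingEnd ℂ) z₀ := by
      have := congrArg (starRingEnd ℂ) e₁
      simpa [map_mul, map_add] using this
    have key : z₁ * ((z₀*z₁+1) * ((starRingEnd ℂ) z₀ * (starRingEnd ℂ) z₁ + 1) - 1) = 0 := by
      linear_combination (z₀*z₁+1) * e₁' + e₀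
    have hz₀of : z₁ = 0 → z₀ = 0 := by
      intro h
      rw [h] at e₁; simpa using e₁.symm
    rcases mul_eq_zero.mp key with h1 | h2
    · exact Or.inl ⟨hz₀of h1, h1⟩
    · by_cases hz₁ : z₁ = 0
      · exact Or.inl ⟨hz₀of hz₁, hz₁⟩
      right
      have hgg : (z₀*z₁+1) * (starRingEnd ℂ) (z₀*z₁+1) = 1 := by
        rw [sub_eq_zero] at h2
        simpa [map_mul, map_add] using h2
      have hnsg : Complex.normSq (z₀*z₁+1) = 1 := by
        have : ((Complex.normSq (z₀*z₁+1) : ℝ) : ℂ) = 1 := by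
          rw [← Complex.mul_conj]; exact hgg
        exact_mod_cast this
      have hmc : z₀ * (starRingEnd ℂ) z₀ = ((Complex.normSq z₀ : ℝ) : ℂ) := Complex.mul_conj z₀
      have e0' : z₁ * (1 - ((Complex.normSq z₀ : ℝ) : ℂ)) = (starRingEnd ℂ) z₀ := by
        linear_combination -e₀ + z₁ * hmc
      have hr : Complex.normSq z₀ = Complex.normSq z₁ := by
        have := congrArg Complex.normSq e₀
        simpa [Complex.normSq_mul, Complex.normSq_conj, hnsg] using this
      have hr2 : Complex.normSq z₁ * ((1 - Complex.normSq z₀) * (1 - Complex.normSq z₀))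
          = Complex.normSq z₀ := by
        have := congrArg Complex.normSq e0'
        rw [Complex.normSq_mul, Complex.normSq_conj] at this
        rw [show (1 - ((Complex.normSq z₀ : ℝ) : ℂ)) = (((1 - Complex.normSq z₀ : ℝ)) : ℂ) by
          push_cast; ring, Complex.normSq_ofReal] at this
        linarith [this]
      have hpos : 0 < Complex.normSq z₁ := Complex.normSq_pos.mpr hz₁
      have h2' : Complex.normSq z₀ = 2 := by
        rw [← hr] at hr2 hpos
        have hcube : Complex.normSq z₀ * Complex.normSq z₀ * (Complex.normSq z₀ - 2) = 0 := by
          linear_combination hr2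
        rcases mul_eq_zero.mp hcube with h | h
        · rcases mul_eq_zero.mp h with h | h <;> exact absurd h (ne_of_gt hpos)
        · linarith
      refine ⟨?_, h2'⟩
      rw [h2'] at e0'
      have : ((2:ℝ):ℂ) = 2 := by norm_num
      rw [this] at e0'
      linear_combination -e0'
  · rintro (⟨h0, h1⟩ | ⟨h1, h2⟩)
    · simp [h0, h1]
    · have hm : z₀ * (starRingEnd ℂ) z₀ = 2 := by
        rw [Complex.mul_conj, h2]; norm_num
      constructor
      · rw [h1]
        linear_combination -((starRingEnd ℂ) z₀) * hm
      · rw [h1]; simp only [map_neg, Complex.conj_conj]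
        linear_combination z₀ * hm

noncomputable def nsDeriv (w : ℂ) : ℂ →L[ℝ] ℝ :=
  Complex.reCLM.comp (w • (Complex.conjCLE.toContinuousLinearMap : ℂ →L[ℝ] ℂ)
    + ((starRingEnd ℂ) w) • (ContinuousLinearMap.id ℝ ℂ))

lemma nsDeriv_apply (w h : ℂ) : nsDeriv w h = (w * (starRingEnd ℂ) h + (starRingEnd ℂ) w * h).re := by
  simp [nsDeriv]

lemma hasFDerivAt_normSq (w : ℂ) : HasFDerivAt Complex.normSq (nsDeriv w) w := by
  have h1 : HasFDerivAt (fun w : ℂ => w * (starRingEnd ℂ) w)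
      (w • (Complex.conjCLE.toContinuousLinearMap : ℂ →L[ℝ] ℂ) + ((starRingEnd ℂ) w) • (ContinuousLinearMap.id ℝ ℂ)) w :=
    (hasFDerivAt_id w).mul (Complex.conjCLE.toContinuousLinearMap.hasFDerivAt)
  have h2 := (Complex.reCLM.hasFDerivAt).comp w h1
  exact h2.congr_of_eventuallyEq (by filter_upwards with w; simp [Complex.mul_conj])

section main
variable {k : ℕ} (ψ : EuclideanSpace ℝ (Fin k) → ℝ) (z₀ z₁ : ℂ) (x : EuclideanSpace ℝ (Fin k))

noncomputable def modelDeriv (Dψ : EuclideanSpace ℝ (Fin k) →L[ℝ] ℝ) :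
    (ℂ × ℂ × EuclideanSpace ℝ (Fin k)) →L[ℝ] ℝ :=
  -((Complex.normSq (z₀ * z₁ + 1))⁻¹ •
      ((nsDeriv (z₀ * z₁ + 1)).comp
        (z₀ • ((ContinuousLinearMap.fst ℝ ℂ (EuclideanSpace ℝ (Fin k))).comp
                (ContinuousLinearMap.snd ℝ ℂ (ℂ × EuclideanSpace ℝ (Fin k))))
          + z₁ • (ContinuousLinearMap.fst ℝ ℂ (ℂ × EuclideanSpace ℝ (Fin k))))))
    + (nsDeriv z₀).comp (ContinuousLinearMap.fst ℝ ℂ (ℂ × EuclideanSpace ℝ (Fin k)))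
    + (nsDeriv z₁).comp ((ContinuousLinearMap.fst ℝ ℂ (EuclideanSpace ℝ (Fin k))).comp
        (ContinuousLinearMap.snd ℝ ℂ (ℂ × EuclideanSpace ℝ (Fin k))))
    + Dψ.comp ((ContinuousLinearMap.snd ℝ ℂ (EuclideanSpace ℝ (Fin k))).comp
        (ContinuousLinearMap.snd ℝ ℂ (ℂ × EuclideanSpace ℝ (Fin k))))

lemma hasFDerivAt_model (hψ : ContDiff ℝ 1 ψ) (hne : z₀ * z₁ + 1 ≠ 0) :
    HasFDerivAt (psiModel ψ) (modelDeriv z₀ z₁ (fderiv ℝ ψ x)) (z₀, z₁, x) := by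
  set P : ℂ × ℂ × EuclideanSpace ℝ (Fin k) := (z₀, z₁, x)
  have hfst : HasFDerivAt (fun p : ℂ × ℂ × EuclideanSpace ℝ (Fin k) => p.1)
      (ContinuousLinearMap.fst ℝ ℂ (ℂ × EuclideanSpace ℝ (Fin k))) P := hasFDerivAt_fst
  have hsnd1 : HasFDerivAt (fun p : ℂ × ℂ × EuclideanSpace ℝ (Fin k) => p.2.1)
      ((ContinuousLinearMap.fst ℝ ℂ (EuclideanSpace ℝ (Fin k))).comp
        (ContinuousLinearMap.snd ℝ ℂ (ℂ × EuclideanSpace ℝ (Fin k)))) P :=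
    hasFDerivAt_fst.comp P hasFDerivAt_snd
  have hsnd2 : HasFDerivAt (fun p : ℂ × ℂ × EuclideanSpace ℝ (Fin k) => p.2.2)
      ((ContinuousLinearMap.snd ℝ ℂ (EuclideanSpace ℝ (Fin k))).comp
        (ContinuousLinearMap.snd ℝ ℂ (ℂ × EuclideanSpace ℝ (Fin k)))) P :=
    hasFDerivAt_snd.comp P hasFDerivAt_snd
  have hg : HasFDerivAt (fun p : ℂ × ℂ × EuclideanSpace ℝ (Fin k) => p.1 * p.2.1 + 1)
      (z₀ • ((ContinuousLinearMap.fst ℝ ℂ (EuclideanSpace ℝ (Fin k))).comp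
                (ContinuousLinearMap.snd ℝ ℂ (ℂ × EuclideanSpace ℝ (Fin k))))
          + z₁ • (ContinuousLinearMap.fst ℝ ℂ (ℂ × EuclideanSpace ℝ (Fin k)))) P :=
    (hfst.mul hsnd1).add_const 1
  have hns : HasFDerivAt (fun p : ℂ × ℂ × EuclideanSpace ℝ (Fin k) => Complex.normSq (p.1 * p.2.1 + 1))
      ((nsDeriv (z₀ * z₁ + 1)).comp _) P := (hasFDerivAt_normSq (z₀ * z₁ + 1)).comp P hg
  have hpos : Complex.normSq (z₀ * z₁ + 1) ≠ 0 := by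
    simpa [Complex.normSq_eq_zero] using hne
  have hlog := (Real.hasDerivAt_log hpos).comp_hasFDerivAt P hns
  have hn0 : HasFDerivAt (fun p : ℂ × ℂ × EuclideanSpace ℝ (Fin k) => Complex.normSq p.1)
      ((nsDeriv z₀).comp _) P := (hasFDerivAt_normSq z₀).comp P hfst
  have hn1 : HasFDerivAt (fun p : ℂ × ℂ × EuclideanSpace ℝ (Fin k) => Complex.normSq p.2.1)
      ((nsDeriv z₁).comp _) P := (hasFDerivAt_normSq z₁).comp P hsnd1
  have hpsi : HasFDerivAt (fun p : ℂ × ℂ × EuclideanSpace ℝ (Fin k) => ψ p.2.2)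
      ((fderiv ℝ ψ x).comp _) P :=
    ((hψ.differentiable one_ne_zero x).hasFDerivAt).comp P hsnd2
  have := ((hlog.neg.add hn0).add hn1).add hpsi
  exact this

lemma modelDeriv_apply (Dψ : EuclideanSpace ℝ (Fin k) →L[ℝ] ℝ) (h₀ h₁ : ℂ)
    (v : EuclideanSpace ℝ (Fin k)) :
    modelDeriv z₀ z₁ Dψ (h₀, h₁, v) =
    2 * ((((starRingEnd ℂ) z₀ - (((Complex.normSq (z₀*z₁+1))⁻¹ : ℝ):ℂ) * ((starRingEnd ℂ) (z₀*z₁+1) * z₁)) * h₀).re)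
    + 2 * ((((starRingEnd ℂ) z₁ - (((Complex.normSq (z₀*z₁+1))⁻¹ : ℝ):ℂ) * ((starRingEnd ℂ) (z₀*z₁+1) * z₀)) * h₁).re)
    + Dψ v := by
  simp only [modelDeriv, ContinuousLinearMap.add_apply, ContinuousLinearMap.coe_comp',
    ContinuousLinearMap.neg_apply, ContinuousLinearMap.smul_apply, Function.comp_apply,
    ContinuousLinearMap.coe_fst', ContinuousLinearMap.coe_snd', nsDeriv_apply, smul_eq_mul]
  rw [← full_ident' ((Complex.normSq (z₀*z₁+1))⁻¹) (z₀*z₁+1) z₀ z₁ h₀ h₁]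

end main

/-- Critical points of the local model
`φ = -log|z₀z₁+1|² + |z₀|² + |z₁|² + ψ(x)`: the derivative of `φ` vanishes at `(z₀,z₁,x)`
iff `x` is a critical point of `ψ` and either `z₀ = z₁ = 0` or (`z₁ = -conj z₀` and
`|z₀|² = 2`); in particular every critical point with `|z₀z₁| < 2` has `z₀ = z₁ = 0`. -/
theorem critical_points_of_plurisubharmonic_model
    (k : ℕ) (ψ : EuclideanSpace ℝ (Fin k) → ℝ) (hψ : ContDiff ℝ 1 ψ)
    (z₀ z₁ : ℂ) (x : EuclideanSpace ℝ (Fin k)) (hne : z₀ * z₁ + 1 ≠ 0) :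
    (fderiv ℝ (psiModel ψ) (z₀, z₁, x) = 0 ↔
      (fderiv ℝ ψ x = 0 ∧
        ((z₀ = 0 ∧ z₁ = 0) ∨
          (z₁ = -(starRingEnd ℂ) z₀ ∧ Complex.normSq z₀ = 2)))) ∧
    (‖z₀ * z₁‖ < 2 → fderiv ℝ (psiModel ψ) (z₀, z₁, x) = 0 →
      z₀ = 0 ∧ z₁ = 0 ∧ fderiv ℝ ψ x = 0) := by
  have hD := hasFDerivAt_model ψ z₀ z₁ x hψ hne
  have hfd := hD.fderiv
  have main : fderiv ℝ (psiModel ψ) (z₀, z₁, x) = 0 ↔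
      (fderiv ℝ ψ x = 0 ∧
        ((z₀ = 0 ∧ z₁ = 0) ∨ (z₁ = -(starRingEnd ℂ) z₀ ∧ Complex.normSq z₀ = 2))) := by
    rw [hfd]
    constructor
    · intro h0
      have hv : ∀ w, modelDeriv z₀ z₁ (fderiv ℝ ψ x) w = 0 := by
        intro w; rw [h0]; rfl
      have hψ0 : fderiv ℝ ψ x = 0 := by
        ext v
        have := hv (0, 0, v)
        rw [modelDeriv_apply] at this
        simpa using this
      have hc₀ : (starRingEnd ℂ) z₀
          - (((Complex.normSq (z₀*z₁+1))⁻¹ : ℝ):ℂ) * ((starRingEnd ℂ) (z₀*z₁+1) * z₁) = 0 := by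
        apply re_forall_zero'
        intro h
        have := hv (h, 0, 0)
        rw [modelDeriv_apply] at this
        simp [hψ0] at this
        simpa using this
      have hc₁ : (starRingEnd ℂ) z₁
          - (((Complex.normSq (z₀*z₁+1))⁻¹ : ℝ):ℂ) * ((starRingEnd ℂ) (z₀*z₁+1) * z₀) = 0 := by
        apply re_forall_zero'
        intro h
        have := hv (0, h, 0)
        rw [modelDeriv_apply] at this
        simp [hψ0] at this
        simpa using this
      exact ⟨hψ0, (algebra_lemma z₀ z₁ hne).mp
        ⟨(coeff_zero_iff' _ z₀ z₁ hne).mp hc₀, (coeff_zero_iff' _ z₁ z₀ hne).mp hc₁⟩⟩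
    · rintro ⟨hψ0, hcase⟩
      obtain ⟨e₀, e₁⟩ := (algebra_lemma z₀ z₁ hne).mpr hcase
      have hc₀ := (coeff_zero_iff' _ z₀ z₁ hne).mpr e₀
      have hc₁ := (coeff_zero_iff' _ z₁ z₀ hne).mpr e₁
      refine ContinuousLinearMap.ext fun w => ?_
      obtain ⟨h₀, h₁, v⟩ := w
      rw [modelDeriv_apply, hc₀, hc₁, hψ0]
      simp
  refine ⟨main, fun habs h0 => ?_⟩
  obtain ⟨hψ0, hcase⟩ := main.mp h0
  rcases hcase with ⟨h0', h1'⟩ | ⟨h1', h2'⟩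
  · exact ⟨h0', h1', hψ0⟩
  · exfalso
    rw [h1'] at habs
    have h2 : z₀ * -(starRingEnd ℂ) z₀ = -(2:ℂ) := by
      have := Complex.mul_conj z₀
      rw [h2'] at this
      push_cast at this
      linear_combination -this
    rw [h2] at habs
    simp at habs
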